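/- Let H be a finite group, U, U' finite-dimensional orthogonal H-representations, ε a 1-dimensional orthogonal H-representation, and r : Mor_H(U ⊕ ε, U') → Mor_H(U, U') the restriction map along the inclusion U ↪ U ⊕ ε. Then for any orthogonal H-representation α, the pullback bundle r*γ_{H,α}(U, U') is H-equivariantly isomorphic to the Whitney sum of the trivial bundle with fiber α ⊗ ε and the bundle γ_{H,α}(U ⊕ ε, U'). -/

import Mathlib

/-- The Stiefel space `Mor_H(U ⊕ ε, W)` of linear isometric embeddings `U ⊕ E → W`. -/
abbrev MorSum (U E W : Type) [NormedAddCommGroup U] [InnerProductSpace ℝ U]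
    [NormedAddCommGroup E] [InnerProductSpace ℝ E]
    [NormedAddCommGroup W] [InnerProductSpace ℝ W] : Type :=
  {g : WithLp 2 (U × E) →L[ℝ] W // Isometry g}

/-- The total space of the pullback `r*γ_{H,α}(U, U')` along the restriction map
`r : Mor(U ⊕ ε, U') → Mor(U, U')`: pairs of a `g : U ⊕ ε → U'` and a vector of
`α ⊗ (im g|_U)^⊥`, encoded as a linear map `A → U'` orthogonal to `g(U)`. -/
abbrev PullbackTotal (U E W A : Type) [NormedAddCommGroup U] [InnerProductSpace ℝ U]
    [NormedAddCommGroup E] [InnerProductSpace ℝ E]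
    [NormedAddCommGroup W] [InnerProductSpace ℝ W]
    [NormedAddCommGroup A] [InnerProductSpace ℝ A] : Type :=
  {x : MorSum U E W × (A →L[ℝ] W) //
    ∀ (a : A) (u : U), @inner ℝ W _ (x.2 a) (x.1.1 ((WithLp.equiv 2 (U × E)).symm (u, 0))) = 0}

/-- The total space of the Whitney sum of the trivial bundle with fiber `α ⊗ ε` (encoded
as `Hom(A, E)`) and the bundle `γ_{H,α}(U ⊕ ε, U')` (whose fiber over `g` is
`α ⊗ (im g)^⊥`). -/
abbrev SumTotal (U E W A : Type) [NormedAddCommGroup U] [InnerProductSpace ℝ U]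
    [NormedAddCommGroup E] [InnerProductSpace ℝ E]
    [NormedAddCommGroup W] [InnerProductSpace ℝ W]
    [NormedAddCommGroup A] [InnerProductSpace ℝ A] : Type :=
  {x : MorSum U E W × ((A →L[ℝ] E) × (A →L[ℝ] W)) //
    ∀ (a : A) (z : WithLp 2 (U × E)), @inner ℝ W _ (x.2.2 a) (x.1.1 z) = 0}

noncomputable section Stmt6Aux

set_option linter.unusedSectionVars false

variable {U E W A : Type} [NormedAddCommGroup U] [InnerProductSpace ℝ U] [FiniteDimensional ℝ U]
    [NormedAddCommGroup E] [InnerProductSpace ℝ E] [FiniteDimensional ℝ E]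
    [NormedAddCommGroup W] [InnerProductSpace ℝ W] [FiniteDimensional ℝ W]
    [NormedAddCommGroup A] [InnerProductSpace ℝ A] [FiniteDimensional ℝ A]

/-- The inclusion `E → U ⊕₂ E` as a continuous linear map. -/
def inrE (U E : Type) [NormedAddCommGroup U] [InnerProductSpace ℝ U]
    [NormedAddCommGroup E] [InnerProductSpace ℝ E] : E →L[ℝ] WithLp 2 (U × E) :=
  (WithLp.prodContinuousLinearEquiv 2 ℝ U E).symm.toContinuousLinearMap.comp
    (ContinuousLinearMap.inr ℝ U E)

@[simp] lemma inrE_apply (e : E) : inrE U E e = (WithLp.equiv 2 (U × E)).symm (0, e) := rfl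

/-- `g` restricted to `E`. -/
def Jmap (g : MorSum U E W) : E →L[ℝ] W := g.1.comp (inrE U E)

lemma inner_g (g : MorSum U E W) (z z' : WithLp 2 (U × E)) :
    (inner ℝ (g.1 z) (g.1 z') : ℝ) = inner ℝ z z' := by
  have : ∀ w, ‖g.1 w‖ = ‖w‖ := fun w => g.2.norm_map_of_map_zero (map_zero g.1) w
  exact LinearIsometry.inner_map_map ⟨g.1.toLinearMap, this⟩ z z'

/-- The `ε`-component of the fiber vector. -/
def Tmap (x : PullbackTotal U E W A) : A →L[ℝ] E :=
  (ContinuousLinearMap.adjoint (Jmap x.1.1)).comp x.1.2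

/-- The `(im g)^⊥`-component of the fiber vector. -/
def Wmap (x : PullbackTotal U E W A) : A →L[ℝ] W :=
  x.1.2 - (Jmap x.1.1).comp (Tmap x)

lemma Tmap_inner (x : PullbackTotal U E W A) (a : A) (e : E) :
    (inner ℝ (Tmap x a) e : ℝ) = inner ℝ (x.1.2 a) (Jmap x.1.1 e) := by
  rw [Tmap, ContinuousLinearMap.comp_apply]
  exact ContinuousLinearMap.adjoint_inner_left (Jmap x.1.1) e (x.1.2 a)

lemma split_z (z : WithLp 2 (U × E)) :
    z = (WithLp.equiv 2 (U × E)).symm (z.fst, 0) + (WithLp.equiv 2 (U × E)).symm (0, z.snd) := by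
  apply (WithLp.equiv 2 (U × E)).injective
  simp [Prod.ext_iff]

lemma Wmap_orth (x : PullbackTotal U E W A) (a : A) (z : WithLp 2 (U × E)) :
    (inner ℝ (Wmap x a) (x.1.1.1 z) : ℝ) = 0 := by
  have hz := split_z (U := U) (E := E) z
  rw [Wmap]
  simp only [ContinuousLinearMap.sub_apply, ContinuousLinearMap.comp_apply,
    inner_sub_left]
  have h1 : (inner ℝ (x.1.2 a) (x.1.1.1 z) : ℝ) = inner ℝ (x.1.2 a) (Jmap x.1.1 z.snd) := by
    conv_lhs => rw [hz]
    rw [map_add, inner_add_right, x.2 a z.fst, zero_add]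
    rfl
  have h2 : (inner ℝ (Jmap x.1.1 (Tmap x a)) (x.1.1.1 z) : ℝ)
      = inner ℝ (x.1.2 a) (Jmap x.1.1 z.snd) := by
    rw [show Jmap x.1.1 (Tmap x a) = x.1.1.1 (inrE U E (Tmap x a)) from rfl, inner_g,
      ← Tmap_inner]
    simp [WithLp.prod_inner_apply]
  rw [h1, h2, sub_self]

/-- The forward map of the bundle isomorphism. -/
def fwd (x : PullbackTotal U E W A) : SumTotal U E W A :=
  ⟨(x.1.1, (Tmap x, Wmap x)), fun a z => Wmap_orth x a z⟩

/-- The inverse map of the bundle isomorphism. -/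
def bwd (y : SumTotal U E W A) : PullbackTotal U E W A :=
  ⟨(y.1.1, y.1.2.2 + (Jmap y.1.1).comp y.1.2.1), by
    intro a u
    simp only [ContinuousLinearMap.add_apply, ContinuousLinearMap.comp_apply, inner_add_left]
    rw [y.2 a _, zero_add,
      show Jmap y.1.1 (y.1.2.1 a) = y.1.1.1 (inrE U E (y.1.2.1 a)) from rfl, inner_g]
    simp [WithLp.prod_inner_apply]⟩

lemma Tmap_bwd (y : SumTotal U E W A) : Tmap (bwd y) = y.1.2.1 := by
  ext a
  apply ext_inner_right ℝ
  intro e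
  rw [Tmap_inner]
  show (inner ℝ (y.1.2.2 a + Jmap y.1.1 (y.1.2.1 a)) (Jmap y.1.1 e) : ℝ) = _
  rw [inner_add_left, show (Jmap y.1.1 e : W) = y.1.1.1 (inrE U E e) from rfl, y.2 a _,
    zero_add, show Jmap y.1.1 (y.1.2.1 a) = y.1.1.1 (inrE U E (y.1.2.1 a)) from rfl, inner_g]
  simp [WithLp.prod_inner_apply]

lemma bwd_fwd (x : PullbackTotal U E W A) : bwd (fwd x) = x := by
  apply Subtype.ext
  refine Prod.ext_iff.mpr ⟨rfl, ?_⟩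
  show Wmap x + (Jmap x.1.1).comp (Tmap x) = x.1.2
  rw [Wmap, sub_add_cancel]

lemma fwd_bwd (y : SumTotal U E W A) : fwd (bwd y) = y := by
  apply Subtype.ext
  refine Prod.ext_iff.mpr ⟨rfl, Prod.ext_iff.mpr ⟨Tmap_bwd y, ?_⟩⟩
  show Wmap (bwd y) = y.1.2.2
  rw [Wmap, Tmap_bwd]
  show (y.1.2.2 + (Jmap y.1.1).comp y.1.2.1) - (Jmap y.1.1).comp y.1.2.1 = y.1.2.2
  exact add_sub_cancel_right _ _

lemma continuous_fwd : Continuous (fwd (U := U) (E := E) (W := W) (A := A)) := by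
  apply Continuous.subtype_mk
  have hg : Continuous fun x : PullbackTotal U E W A => (x.1.1.1 : WithLp 2 (U × E) →L[ℝ] W) :=
    (continuous_subtype_val.comp (continuous_fst.comp continuous_subtype_val))
  have hv : Continuous fun x : PullbackTotal U E W A => x.1.2 :=
    continuous_snd.comp continuous_subtype_val
  have hJ : Continuous fun x : PullbackTotal U E W A => Jmap x.1.1 :=
    hg.clm_comp continuous_const
  have hJadj : Continuous fun x : PullbackTotal U E W A =>
      ContinuousLinearMap.adjoint (Jmap x.1.1) :=
    (ContinuousLinearMap.adjoint (E := E) (F := W)).continuous.comp hJ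
  have hT : Continuous fun x : PullbackTotal U E W A => Tmap x := hJadj.clm_comp hv
  have hW : Continuous fun x : PullbackTotal U E W A => Wmap x :=
    hv.sub (hJ.clm_comp hT)
  exact ((continuous_fst.comp continuous_subtype_val).prodMk (hT.prodMk hW))

lemma continuous_bwd : Continuous (bwd (U := U) (E := E) (W := W) (A := A)) := by
  apply Continuous.subtype_mk
  have hg : Continuous fun y : SumTotal U E W A => (y.1.1.1 : WithLp 2 (U × E) →L[ℝ] W) :=
    (continuous_subtype_val.comp (continuous_fst.comp continuous_subtype_val))
  have ht : Continuous fun y : SumTotal U E W A => y.1.2.1 :=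
    continuous_fst.comp (continuous_snd.comp continuous_subtype_val)
  have hw : Continuous fun y : SumTotal U E W A => y.1.2.2 :=
    continuous_snd.comp (continuous_snd.comp continuous_subtype_val)
  have hJ : Continuous fun y : SumTotal U E W A => Jmap y.1.1 :=
    hg.clm_comp continuous_const
  exact ((continuous_fst.comp continuous_subtype_val).prodMk (hw.add (hJ.clm_comp ht)))

/-- The bundle isomorphism as a homeomorphism. -/
def phiHomeo : PullbackTotal U E W A ≃ₜ SumTotal U E W A where
  toFun := fwd
  invFun := bwd
  left_inv := bwd_fwd
  right_inv := fwd_bwd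
  continuous_toFun := continuous_fwd
  continuous_invFun := continuous_bwd

lemma rho_cancel {G V : Type} [Group G] [NormedAddCommGroup V] [InnerProductSpace ℝ V]
    (ρ : G →* (V ≃ₗᵢ[ℝ] V)) (h : G) (v : V) : ρ h (ρ h⁻¹ v) = v := by
  have : ρ h * ρ h⁻¹ = 1 := by rw [← map_mul, mul_inv_cancel, map_one]
  calc ρ h (ρ h⁻¹ v) = (ρ h * ρ h⁻¹) v := rfl
    _ = v := by rw [this]; rfl

lemma rho_cancel' {G V : Type} [Group G] [NormedAddCommGroup V] [InnerProductSpace ℝ V]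
    (ρ : G →* (V ≃ₗᵢ[ℝ] V)) (h : G) (v : V) : ρ h⁻¹ (ρ h v) = v := by
  simpa using rho_cancel ρ h⁻¹ v

end Stmt6Aux

/-- For a 1-dimensional orthogonal `H`-representation `ε` (here `E`) and
orthogonal `H`-representations `U`, `U'` (here `W`), `α` (here `A`), the pullback bundle
`r*γ_{H,α}(U,U')` along restriction is `H`-equivariantly isomorphic, as a vector bundle
over `Mor_H(U ⊕ ε, U')`, to the Whitney sum of the trivial bundle with fiber `α ⊗ ε` and
the bundle `γ_{H,α}(U ⊕ ε, U')`, via the decomposition `(im g|_U)^⊥ ≅ g(ε) ⊕ (im g)^⊥`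
with `g(ε) ≅ ε`. -/
theorem stmt6 (H : Type) [Group H] [Finite H]
    (U E W A : Type) [NormedAddCommGroup U] [InnerProductSpace ℝ U] [FiniteDimensional ℝ U]
    [NormedAddCommGroup E] [InnerProductSpace ℝ E] [FiniteDimensional ℝ E]
    [NormedAddCommGroup W] [InnerProductSpace ℝ W] [FiniteDimensional ℝ W]
    [NormedAddCommGroup A] [InnerProductSpace ℝ A] [FiniteDimensional ℝ A]
    (hE : Module.finrank ℝ E = 1)
    (ρU : H →* (U ≃ₗᵢ[ℝ] U)) (ρE : H →* (E ≃ₗᵢ[ℝ] E)) (ρW : H →* (W ≃ₗᵢ[ℝ] W))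
    (ρA : H →* (A ≃ₗᵢ[ℝ] A)) :
    ∃ φ : PullbackTotal U E W A ≃ₜ SumTotal U E W A,
      -- φ is a map of bundles over Mor(U ⊕ ε, U')
      (∀ x : PullbackTotal U E W A, (φ x).1.1 = x.1.1) ∧
      -- defining formula: v = w + g(0, t a), i.e. decompose v into the g(ε)-component
      -- (the trivial `α ⊗ ε` factor) and the part orthogonal to all of im g
      (∀ (x : PullbackTotal U E W A) (a : A),
        x.1.2 a = (φ x).1.2.2 a +
          x.1.1.1 ((WithLp.equiv 2 (U × E)).symm (0, (φ x).1.2.1 a))) ∧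
      -- φ is fiberwise linear
      (∀ (x y z : PullbackTotal U E W A) (c : ℝ),
        y.1.1 = x.1.1 → z.1.1 = x.1.1 →
        (∀ a : A, z.1.2 a = c • x.1.2 a + y.1.2 a) →
        (∀ a : A, (φ z).1.2.1 a = c • (φ x).1.2.1 a + (φ y).1.2.1 a) ∧
        (∀ a : A, (φ z).1.2.2 a = c • (φ x).1.2.2 a + (φ y).1.2.2 a)) ∧
      -- φ is H-equivariant for the conjugation actions
      (∀ (h : H) (x x' : PullbackTotal U E W A),
        (∀ (u : U) (e : E), x'.1.1.1 ((WithLp.equiv 2 (U × E)).symm (u, e)) =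
          ρW h (x.1.1.1 ((WithLp.equiv 2 (U × E)).symm (ρU h⁻¹ u, ρE h⁻¹ e)))) →
        (∀ a : A, x'.1.2 a = ρW h (x.1.2 (ρA h⁻¹ a))) →
        (∀ a : A, (φ x').1.2.1 a = ρE h ((φ x).1.2.1 (ρA h⁻¹ a))) ∧
        (∀ a : A, (φ x').1.2.2 a = ρW h ((φ x).1.2.2 (ρA h⁻¹ a)))) := by
  refine ⟨phiHomeo, fun x => rfl, ?_, ?_, ?_⟩
  · intro x a
    show x.1.2 a = Wmap x a + Jmap x.1.1 (Tmap x a)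
    rw [Wmap]
    simp only [ContinuousLinearMap.sub_apply, ContinuousLinearMap.comp_apply]
    rw [sub_add_cancel]
  · intro x y z c hy hz hv
    have hJz : Jmap z.1.1 = Jmap x.1.1 := by rw [hz]
    have hJy : Jmap y.1.1 = Jmap x.1.1 := by rw [hy]
    have hT : ∀ a, Tmap z a = c • Tmap x a + Tmap y a := by
      intro a
      show ContinuousLinearMap.adjoint (Jmap z.1.1) (z.1.2 a)
        = c • ContinuousLinearMap.adjoint (Jmap x.1.1) (x.1.2 a)
          + ContinuousLinearMap.adjoint (Jmap y.1.1) (y.1.2 a)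
      rw [hJz, hJy, hv a, map_add, map_smul]
    refine ⟨hT, ?_⟩
    intro a
    show z.1.2 a - Jmap z.1.1 (Tmap z a)
      = c • (x.1.2 a - Jmap x.1.1 (Tmap x a)) + (y.1.2 a - Jmap y.1.1 (Tmap y a))
    rw [hJz, hJy, hv a, hT a, map_add, map_smul]
    module
  · intro h x x' h1 h2
    have hJ' : ∀ e, Jmap x'.1.1 e = ρW h (Jmap x.1.1 (ρE h⁻¹ e)) := by
      intro e
      have h0 := h1 0 e
      rw [map_zero] at h0
      exact h0
    have hT' : ∀ a, Tmap x' a = ρE h (Tmap x (ρA h⁻¹ a)) := by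
      intro a
      apply ext_inner_right ℝ
      intro e
      rw [Tmap_inner, h2 a, hJ' e, LinearIsometryEquiv.inner_map_map, ← Tmap_inner,
        ← LinearIsometryEquiv.inner_map_map (ρE h), rho_cancel ρE h e]
    refine ⟨hT', ?_⟩
    intro a
    show x'.1.2 a - Jmap x'.1.1 (Tmap x' a)
      = ρW h (x.1.2 (ρA h⁻¹ a) - Jmap x.1.1 (Tmap x (ρA h⁻¹ a)))
    rw [h2 a, hT' a, hJ', rho_cancel' ρE, ← map_sub]
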